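/- Let G(z) = D + z C (I_n - zA)^{-1} B with A stable, and let P be the controllability Gramian of {A,B}. Then for all z on the unit circle, G(z) G(z)* = z C (I_n - zA)^{-1} Γ1 + (D D* + C P C*) + Γ1* (z I_n - A*)^{-1} C*, where Γ1 = B D* + A P C*. -/

import Mathlib

open Matrix Filter
open scoped ENNReal NNReal

attribute [local instance] Matrix.frobeniusNormedAddCommGroup Matrix.frobeniusNormedRing
  Matrix.frobeniusNormedAlgebra Matrix.frobeniusNormedSpace

lemma aux_norm_pow_tendsto {n : ℕ} (A : Matrix (Fin n) (Fin n) ℂ)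
    (hA : ∀ μ ∈ spectrum ℂ A, ‖μ‖ < 1) :
    Tendsto (fun k : ℕ => ‖A ^ k‖) atTop (nhds 0) := by
  rcases Nat.eq_zero_or_pos n with hn | hn
  · subst hn
    have h0 : ∀ k : ℕ, A ^ k = 0 := by
      intro k; ext i j; exact i.elim0
    simp [h0]
  · haveI : Nonempty (Fin n) := ⟨⟨0, hn⟩⟩
    haveI : Nontrivial (Matrix (Fin n) (Fin n) ℂ) := inferInstance
    have h1 : spectralRadius ℂ A < 1 := by
      have := spectrum.spectralRadius_lt_of_forall_lt (a := A) (r := 1)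
        (fun z hz => by have h := hA z hz; rw [← coe_nnnorm] at h; exact_mod_cast h)
      simpa using this
    obtain ⟨c, hc1, hc2⟩ := exists_between h1
    have hctop : c ≠ ⊤ := (hc2.trans ENNReal.one_lt_top).ne
    set c' := c.toNNReal with hc'def
    have hc' : (c' : ℝ≥0∞) = c := ENNReal.coe_toNNReal hctop
    have hc'1 : (c' : ℝ) < 1 := by
      have : (c' : ℝ≥0∞) < 1 := hc' ▸ hc2
      exact_mod_cast this
    have hev : ∀ᶠ k : ℕ in atTop, (‖A ^ k‖₊ : ℝ≥0∞) ^ (1 / (k : ℝ)) < c :=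
      (spectrum.pow_nnnorm_pow_one_div_tendsto_nhds_spectralRadius A).eventually_lt_const hc1
    have key : ∀ᶠ k : ℕ in atTop, ‖A ^ k‖ ≤ (c' : ℝ) ^ k := by
      filter_upwards [hev, eventually_ge_atTop 1] with k hk hk1
      have hkne : (k : ℝ) ≠ 0 := by positivity
      have h2 : ((‖A ^ k‖₊ : ℝ≥0∞) ^ (1 / (k : ℝ))) ^ (k : ℝ) < c ^ (k : ℝ) :=
        ENNReal.rpow_lt_rpow hk (by positivity)
      rw [← ENNReal.rpow_mul, one_div, inv_mul_cancel₀ hkne, ENNReal.rpow_one, ← hc',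
        ENNReal.rpow_natCast, ← ENNReal.coe_pow, ENNReal.coe_lt_coe] at h2
      have := h2.le
      calc ‖A ^ k‖ = ((‖A ^ k‖₊ : ℝ≥0) : ℝ) := rfl
        _ ≤ ((c' ^ k : ℝ≥0) : ℝ) := by exact_mod_cast this
        _ = (c' : ℝ) ^ k := by push_cast; ring
    exact squeeze_zero' (Eventually.of_forall fun k => norm_nonneg _) key
      (tendsto_pow_atTop_nhds_zero_of_lt_one c'.coe_nonneg hc'1)

set_option maxHeartbeats 1000000 in
lemma aux_P_herm {n p : ℕ} (A : Matrix (Fin n) (Fin n) ℂ) (B : Matrix (Fin n) (Fin p) ℂ)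
    (hA : ∀ μ ∈ spectrum ℂ A, ‖μ‖ < 1)
    (P : Matrix (Fin n) (Fin n) ℂ) (hP : P = A * P * Aᴴ + B * Bᴴ) : Pᴴ = P := by
  set Q := P - Pᴴ with hQdef
  have hPH : Pᴴ = A * Pᴴ * Aᴴ + B * Bᴴ := by
    conv_lhs => rw [hP]
    simp [conjTranspose_add, conjTranspose_mul, Matrix.mul_assoc]
  have hQ : Q = A * Q * Aᴴ := by
    calc Q = P - Pᴴ := hQdef
      _ = (A * P * Aᴴ + B * Bᴴ) - (A * Pᴴ * Aᴴ + B * Bᴴ) := by rw [← hP, ← hPH]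
      _ = A * (P - Pᴴ) * Aᴴ := by noncomm_ring
      _ = A * Q * Aᴴ := by rw [← hQdef]
  have hQk : ∀ k : ℕ, Q = A ^ k * Q * (Aᴴ) ^ k := by
    intro k
    induction k with
    | zero => simp
    | succ k ih =>
      calc Q = A * Q * Aᴴ := hQ
        _ = A * (A ^ k * Q * Aᴴ ^ k) * Aᴴ := by rw [← ih]
        _ = A ^ (k+1) * Q * Aᴴ ^ (k+1) := by
            rw [pow_succ' A k, pow_succ Aᴴ k]; noncomm_ring
  have hbound : ∀ k : ℕ, ‖Q‖ ≤ ‖A ^ k‖ * ‖Q‖ * ‖A ^ k‖ := by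
    intro k
    have h2 : ‖A ^ k * Q * Aᴴ ^ k‖ ≤ ‖A ^ k * Q‖ * ‖Aᴴ ^ k‖ :=
      Matrix.frobenius_norm_mul _ _
    have h3 : ‖A ^ k * Q‖ ≤ ‖A ^ k‖ * ‖Q‖ := Matrix.frobenius_norm_mul _ _
    have h4 : ‖Aᴴ ^ k‖ = ‖A ^ k‖ := by
      rw [← conjTranspose_pow, Matrix.frobenius_norm_conjTranspose]
    calc ‖Q‖ = ‖A ^ k * Q * Aᴴ ^ k‖ := by rw [← hQk k]
      _ ≤ ‖A ^ k * Q‖ * ‖Aᴴ ^ k‖ := h2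
      _ ≤ ‖A ^ k‖ * ‖Q‖ * ‖A ^ k‖ := by
          rw [h4]
          exact mul_le_mul_of_nonneg_right h3 (norm_nonneg _)
  have hlim : Tendsto (fun k : ℕ => ‖A ^ k‖ * ‖Q‖ * ‖A ^ k‖) atTop (nhds 0) := by
    have := ((aux_norm_pow_tendsto A hA).mul_const ‖Q‖).mul (aux_norm_pow_tendsto A hA)
    simpa using this
  have hQ0 : ‖Q‖ ≤ 0 := ge_of_tendsto' hlim hbound
  have h6 : Q = 0 := norm_eq_zero.mp (le_antisymm hQ0 (norm_nonneg _))
  exact (sub_eq_zero.mp h6).symm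

set_option maxHeartbeats 1000000 in
/-- Let `G(z) = D + zC(I - zA)⁻¹B` with `A` stable and `P` the controllability Gramian of
`{A,B}`. Then for all `z` on the unit circle,
`G(z)G(z)ᴴ = z C (I - zA)⁻¹ Γ1 + (D Dᴴ + C P Cᴴ) + Γ1ᴴ (zI - Aᴴ)⁻¹ Cᴴ`,
where `Γ1 = B Dᴴ + A P Cᴴ`. -/
theorem stmt5 {n m p : ℕ} (A : Matrix (Fin n) (Fin n) ℂ) (B : Matrix (Fin n) (Fin p) ℂ)
    (C : Matrix (Fin m) (Fin n) ℂ) (D : Matrix (Fin m) (Fin p) ℂ)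
    (hA : ∀ μ ∈ spectrum ℂ A, ‖μ‖ < 1)
    (P : Matrix (Fin n) (Fin n) ℂ) (hP : P = A * P * Aᴴ + B * Bᴴ)
    (G : ℂ → Matrix (Fin m) (Fin p) ℂ)
    (hG : ∀ z : ℂ, G z = D + z • (C * (1 - z • A)⁻¹ * B))
    (Γ1 : Matrix (Fin n) (Fin m) ℂ) (hΓ1 : Γ1 = B * Dᴴ + A * P * Cᴴ) :
    ∀ z : ℂ, ‖z‖ = 1 →
      G z * (G z)ᴴ =
        z • (C * (1 - z • A)⁻¹ * Γ1) + (D * Dᴴ + C * P * Cᴴ) +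
          Γ1ᴴ * (z • (1 : Matrix (Fin n) (Fin n) ℂ) - Aᴴ)⁻¹ * Cᴴ := by
  have hPH : Pᴴ = P := aux_P_herm A B hA P hP
  intro z hz
  have hz0 : z ≠ 0 := by
    intro h; rw [h] at hz; simp at hz
  have hzw : z * z⁻¹ = 1 := mul_inv_cancel₀ hz0
  have hwz : z⁻¹ * z = 1 := inv_mul_cancel₀ hz0
  have hstar : star z = z⁻¹ := by
    refine (inv_eq_of_mul_eq_one_right ?_).symm
    rw [Complex.star_def, Complex.mul_conj]
    norm_cast
    rw [Complex.normSq_eq_norm_sq, hz]; norm_num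
  set U : Matrix (Fin n) (Fin n) ℂ := 1 - z • A with hUdef
  set V : Matrix (Fin n) (Fin n) ℂ := 1 - z⁻¹ • Aᴴ with hVdef
  -- U is a unit
  have hmem : z⁻¹ ∉ spectrum ℂ A := by
    intro hmem
    have := hA _ hmem
    rw [norm_inv, hz] at this; norm_num at this
  have hunit : IsUnit ((z⁻¹ • 1 : Matrix (Fin n) (Fin n) ℂ) - A) := by
    have := spectrum.notMem_iff.mp hmem
    rwa [Algebra.algebraMap_eq_smul_one] at this
  have hfacU : U = z • ((z⁻¹ • 1 : Matrix (Fin n) (Fin n) ℂ) - A) := by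
    rw [hUdef, smul_sub, smul_smul, hzw, one_smul]
  have hU : IsUnit U.det := by
    rw [hfacU, Matrix.det_smul, Fintype.card_fin]
    exact (hz0.isUnit.pow n).mul ((Matrix.isUnit_iff_isUnit_det _).mp hunit)
  have hUV : Uᴴ = V := by
    rw [hUdef, hVdef]
    simp [conjTranspose_sub, conjTranspose_smul, hstar]
  have hV : IsUnit V.det := by
    rw [← hUV, Matrix.det_conjTranspose]
    exact hU.star
  have hMH : (U⁻¹)ᴴ = V⁻¹ := by rw [Matrix.conjTranspose_nonsing_inv, hUV]
  have hinv : (z • (1 : Matrix (Fin n) (Fin n) ℂ) - Aᴴ)⁻¹ = z⁻¹ • V⁻¹ := by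
    have hzV : z • V = z • (1 : Matrix (Fin n) (Fin n) ℂ) - Aᴴ := by
      rw [hVdef, smul_sub, smul_smul, hzw, one_smul]
    rw [← hzV]
    apply Matrix.inv_eq_right_inv
    rw [Matrix.smul_mul, Matrix.mul_smul, smul_smul, hzw, one_smul,
      Matrix.mul_nonsing_inv _ hV]
  -- key factorization
  set X : Matrix (Fin n) (Fin n) ℂ :=
    P + z • (U⁻¹ * (A * P)) + z⁻¹ • (P * Aᴴ * V⁻¹) with hXdef
  have hfac2 : U * X * V = B * Bᴴ := by
    have e1 : U * X = U * P + z • (A * P) + z⁻¹ • (U * (P * Aᴴ * V⁻¹)) := by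
      rw [hXdef, Matrix.mul_add, Matrix.mul_add, Matrix.mul_smul, Matrix.mul_smul,
        Matrix.mul_nonsing_inv_cancel_left _ _ hU]
    rw [e1]
    rw [Matrix.add_mul, Matrix.add_mul, Matrix.smul_mul, Matrix.smul_mul,
      Matrix.mul_assoc U (P * Aᴴ * V⁻¹) V, Matrix.nonsing_inv_mul_cancel_right _ _ hV]
    -- now expand U and V
    have hBB : B * Bᴴ = P - A * (P * Aᴴ) := by
      rw [eq_sub_iff_add_eq, add_comm, ← Matrix.mul_assoc, ← hP]
    rw [hUdef, hVdef, hBB]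
    simp only [Matrix.sub_mul, Matrix.mul_sub, Matrix.smul_mul, Matrix.mul_smul,
      Matrix.one_mul, Matrix.mul_one, smul_sub, sub_smul, smul_smul, hzw, hwz, one_smul,
      Matrix.mul_assoc]
    abel
  have hkey : U⁻¹ * (B * Bᴴ) * V⁻¹ = X := by
    rw [← hfac2, Matrix.mul_assoc U X V, Matrix.nonsing_inv_mul_cancel_left _ _ hU,
      Matrix.mul_nonsing_inv_cancel_right _ _ hV]
  -- assemble
  have hGH : (G z)ᴴ = Dᴴ + z⁻¹ • (Bᴴ * (V⁻¹ * Cᴴ)) := by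
    rw [hG z]
    simp only [conjTranspose_add, conjTranspose_smul, conjTranspose_mul, hstar, hMH,
      Matrix.mul_assoc, ← hUdef]
  have hkey2 : C * (U⁻¹ * (B * (Bᴴ * (V⁻¹ * Cᴴ)))) =
      C * (P * Cᴴ) + z • (C * (U⁻¹ * (A * (P * Cᴴ)))) + z⁻¹ • (C * (P * (Aᴴ * (V⁻¹ * Cᴴ)))) := by
    have h := congrArg (fun M : Matrix (Fin n) (Fin n) ℂ => C * M * Cᴴ) hkey
    simp only [hXdef, Matrix.mul_add, Matrix.add_mul, Matrix.mul_smul, Matrix.smul_mul,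
      Matrix.mul_assoc] at h
    convert h using 2
  rw [hGH, hG z, hΓ1, hinv]
  simp only [conjTranspose_add, conjTranspose_mul, hPH]
  simp only [Matrix.mul_add, Matrix.add_mul]
  simp only [Matrix.mul_smul, Matrix.smul_mul]
  simp only [smul_smul, hzw, hwz, one_smul, smul_add]
  simp only [Matrix.mul_assoc]
  simp only [← hUdef]
  simp only [conjTranspose_conjTranspose]
  rw [hkey2]
  abel
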